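/- Let R be a commutative based ring and let S be a based subring of R. Then (S^co)_ad ⊆ S ⊆ (S_ad)^co. -/

import Mathlib

/-- A *based ring* (fusion ring). -/
structure BasedRing (ι R : Type*) [Fintype ι] [DecidableEq ι] [Ring R] where
  b : Module.Basis ι ℤ R
  unit : ι
  b_unit : b unit = 1
  star : ι → ι
  star_invol : ∀ i, star (star i) = i
  c_nonneg : ∀ i j k, 0 ≤ b.repr (b i * b j) k
  adj_right : ∀ i j k, b.repr (b i * b j) k = b.repr (b k * b (star j)) i
  adj_left : ∀ i j k, b.repr (b i * b j) k = b.repr (b (star i) * b k) j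

namespace BasedRing

variable {ι R : Type*} [Fintype ι] [DecidableEq ι] [Ring R] (BR : BasedRing ι R)

/-- `x` (with nonnegative coordinates) *contains* the basic element `k`. -/
def contains (x : R) (k : ι) : Prop := 0 < BR.b.repr x k

/-- The `ℤ`-span of a (finite) set of basic elements. -/
def spanOf (C : Finset ι) : Submodule ℤ R := Submodule.span ℤ (BR.b '' (↑C : Set ι))

/-- `C` indexes a *based subring* of `R`: it contains the unit, is closed under
the involution, and every basic element contained in a product of two of its
elements again lies in it. -/
def IsBasedSubring (C : Finset ι) : Prop :=
  BR.unit ∈ C ∧ (∀ i ∈ C, BR.star i ∈ C) ∧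
    ∀ i ∈ C, ∀ j ∈ C, ∀ k, BR.contains (BR.b i * BR.b j) k → k ∈ C

open Classical in
/-- The adjoint subring `S_ad` of the based subring `S` spanned by `C`: the
basic elements contained in some power (`n ≥ 1`) of `Σ_{X basic in S} X X*`. -/
noncomputable def adOf (C : Finset ι) : Finset ι :=
  Finset.univ.filter fun k => ∃ n : ℕ, 1 ≤ n ∧
    BR.contains ((∑ i ∈ C, BR.b i * BR.b (BR.star i)) ^ n) k

open Classical in
/-- The commutator `S^co` of the based subring `S` spanned by `C`: the basic
elements `Y` with `YY* ∈ S`. -/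
noncomputable def coOf (C : Finset ι) : Finset ι :=
  Finset.univ.filter fun j => BR.b j * BR.b (BR.star j) ∈ BR.spanOf C

end BasedRing

namespace BasedRing

variable {ι R : Type*} [Fintype ι] [DecidableEq ι] [Ring R] (BR : BasedRing ι R)

lemma mem_spanOf_iff (C : Finset ι) (x : R) :
    x ∈ BR.spanOf C ↔ ∀ k, BR.b.repr x k ≠ 0 → k ∈ C := by
  rw [spanOf, Module.Basis.mem_span_image]
  constructor
  · intro h k hk
    exact h (Finsupp.mem_support_iff.mpr hk)
  · intro h k hk
    exact h k (Finsupp.mem_support_iff.mp hk)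

lemma mul_mem_spanOf {C : Finset ι} (hC : BR.IsBasedSubring C) {x y : R}
    (hx : x ∈ BR.spanOf C) (hy : y ∈ BR.spanOf C) : x * y ∈ BR.spanOf C := by
  obtain ⟨-, -, hmul⟩ := hC
  rw [spanOf] at hx hy
  induction hx, hy using Submodule.span_induction₂ with
  | mem_mem a b ha hb =>
    obtain ⟨i, hi, rfl⟩ := ha
    obtain ⟨j, hj, rfl⟩ := hb
    rw [BR.mem_spanOf_iff]
    intro k hk
    refine hmul i hi j hj k ?_
    exact lt_of_le_of_ne (BR.c_nonneg i j k) (Ne.symm hk)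
  | zero_left b hb => simpa using (BR.spanOf C).zero_mem
  | zero_right a ha => simpa using (BR.spanOf C).zero_mem
  | add_left a b c ha hb hc h1 h2 => rw [add_mul]; exact (BR.spanOf C).add_mem h1 h2
  | add_right a b c ha hb hc h1 h2 => rw [mul_add]; exact (BR.spanOf C).add_mem h1 h2
  | smul_left r a b ha hb h => rw [smul_mul_assoc]; exact (BR.spanOf C).smul_mem r h
  | smul_right r a b ha hb h => rw [mul_smul_comm]; exact (BR.spanOf C).smul_mem r h

lemma pow_mem_spanOf {C : Finset ι} (hC : BR.IsBasedSubring C) {x : R}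
    (hx : x ∈ BR.spanOf C) {n : ℕ} (hn : 1 ≤ n) : x ^ n ∈ BR.spanOf C := by
  induction n with
  | zero => omega
  | succ m ih =>
    rcases Nat.eq_or_lt_of_le hn with h | h
    · rw [← h, pow_one]; exact hx
    · rw [pow_succ]
      exact BR.mul_mem_spanOf hC (ih (by omega)) hx

end BasedRing

/-- Let `R` be a commutative based ring and `S` a based subring
(with basic elements indexed by `C`). Then `(S^co)_ad ⊆ S ⊆ (S_ad)^co`. -/
theorem coad_le_le_adco {ι R : Type*} [Fintype ι] [DecidableEq ι] [Ring R]
    (BR : BasedRing ι R) (hcomm : ∀ x y : R, x * y = y * x)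
    (C : Finset ι) (hC : BR.IsBasedSubring C) :
    BR.adOf (BR.coOf C) ⊆ C ∧ C ⊆ BR.coOf (BR.adOf C) := by
  classical
  constructor
  · intro k hk
    rw [BasedRing.adOf, Finset.mem_filter] at hk
    obtain ⟨-, n, hn, hpos⟩ := hk
    have hsum : (∑ i ∈ BR.coOf C, BR.b i * BR.b (BR.star i)) ∈ BR.spanOf C := by
      refine Submodule.sum_mem _ fun i hi => ?_
      rw [BasedRing.coOf, Finset.mem_filter] at hi
      exact hi.2
    have hpow := BR.pow_mem_spanOf hC hsum hn
    exact (BR.mem_spanOf_iff C _).mp hpow k (ne_of_gt hpos)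
  · intro j hj
    rw [BasedRing.coOf, Finset.mem_filter]
    refine ⟨Finset.mem_univ j, ?_⟩
    rw [BR.mem_spanOf_iff]
    intro k hk
    rw [BasedRing.adOf, Finset.mem_filter]
    refine ⟨Finset.mem_univ k, 1, le_refl 1, ?_⟩
    rw [BasedRing.contains, pow_one, map_sum, Finsupp.coe_finset_sum, Finset.sum_apply]
    refine Finset.sum_pos' (fun i _ => BR.c_nonneg i (BR.star i) k) ⟨j, hj, ?_⟩
    exact lt_of_le_of_ne (BR.c_nonneg j (BR.star j) k) (Ne.symm hk)
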